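/- Let ε | T₁ ~ N(0, σ₁²) where σ₁² = λ(b−a)³/(48 m²), and let the event T₁ occur with probability P(T₁) = P_{Z~N(0,1)}(|Z| < 4mτ/√(λ(b−a)³)). Then P(|ε| > τ) ≥ P(|ε| > τ | T₁) P(T₁) = [1 − erf(2√6 m τ / √(λ(b−a)³))] · erf(2√2 m τ / √(λ(b−a)³)) > 0 for all τ > 0, λ > 0, m ≥ 1, a < b. -/

import Mathlib

open MeasureTheory ProbabilityTheory

/-- The error function `erf(x) = (2/√π) ∫_0^x e^{−t²} dt`. -/
noncomputable def erf (x : ℝ) : ℝ := 2 / Real.sqrt Real.pi * ∫ t in (0:ℝ)..x, Real.exp (-t ^ 2)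

lemma erf_aux_integrable (a b : ℝ) :
    IntervalIntegrable (fun t : ℝ => Real.exp (-t ^ 2)) volume a b :=
  (Continuous.intervalIntegrable (by continuity) a b)

lemma erf_nonneg {x : ℝ} (hx : 0 ≤ x) : 0 ≤ erf x := by
  have h : 0 ≤ ∫ t in (0:ℝ)..x, Real.exp (-t ^ 2) :=
    intervalIntegral.integral_nonneg hx (fun t _ => (Real.exp_pos _).le)
  have h2 : 0 ≤ 2 / Real.sqrt Real.pi := by positivity
  exact mul_nonneg h2 h

lemma erf_pos {x : ℝ} (hx : 0 < x) : 0 < erf x := by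
  have h : 0 < ∫ t in (0:ℝ)..x, Real.exp (-t ^ 2) :=
    intervalIntegral.intervalIntegral_pos_of_pos_on (erf_aux_integrable 0 x)
      (fun t _ => Real.exp_pos _) hx
  have h2 : 0 < 2 / Real.sqrt Real.pi := by positivity
  exact mul_pos h2 h

lemma erf_symm_integral (u : ℝ) :
    ∫ t in (-u)..u, Real.exp (-t ^ 2) = 2 * ∫ t in (0:ℝ)..u, Real.exp (-t ^ 2) := by
  have h1 : ∫ t in (-u)..(0:ℝ), Real.exp (-t ^ 2) = ∫ t in (0:ℝ)..u, Real.exp (-t ^ 2) := by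
    have h := intervalIntegral.integral_comp_neg (a := (0:ℝ)) (b := u)
      (fun t : ℝ => Real.exp (-t ^ 2))
    simp only [neg_neg, neg_zero, neg_sq] at h
    exact h.symm
  rw [← intervalIntegral.integral_add_adjacent_intervals (erf_aux_integrable (-u) 0)
      (erf_aux_integrable 0 u), h1]
  ring

/-- The two-sided tail of a centred Gaussian in terms of `erf`. -/
lemma gaussian_tail (v τ : ℝ) (hv : 0 < v) (hτ : 0 < τ) :
    gaussianReal 0 v.toNNReal {x | τ < |x|} =
      ENNReal.ofReal (1 - erf (τ / Real.sqrt (2 * v))) := by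
  have hV : v.toNNReal ≠ 0 := by
    simp only [ne_eq, Real.toNNReal_eq_zero, not_le]
    exact hv
  have hVc : ((v.toNNReal : ℝ)) = v := Real.coe_toNNReal v hv.le
  set c := Real.sqrt (2 * v) with hc
  have hc0 : 0 < c := Real.sqrt_pos.2 (by linarith)
  have hIcc : gaussianReal 0 v.toNNReal (Set.Icc (-τ) τ) = ENNReal.ofReal (erf (τ / c)) := by
    rw [gaussianReal_apply_eq_integral 0 hV]
    congr 1
    have key : ∫ x in Set.Icc (-τ) τ, gaussianPDFReal 0 v.toNNReal x
        = ∫ x in (-τ)..τ, gaussianPDFReal 0 v.toNNReal x := by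
      rw [intervalIntegral.integral_of_le (by linarith),
        ← MeasureTheory.integral_Icc_eq_integral_Ioc]
    rw [key]
    have hpdf : ∀ x : ℝ, gaussianPDFReal 0 v.toNNReal x
        = (Real.sqrt (2 * Real.pi * v))⁻¹ * Real.exp (-(x / c) ^ 2) := by
      intro x
      rw [gaussianPDFReal]
      congr 1
      · rw [hVc]
      · congr 1
        rw [div_pow, hc, Real.sq_sqrt (by linarith : (0:ℝ) ≤ 2 * v), hVc]
        ring
    simp_rw [hpdf]
    rw [intervalIntegral.integral_const_mul,
      intervalIntegral.integral_comp_div (fun t : ℝ => Real.exp (-t ^ 2)) hc0.ne',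
      smul_eq_mul, neg_div, erf_symm_integral]
    have hsplit : Real.sqrt (2 * Real.pi * v) = Real.sqrt Real.pi * c := by
      rw [hc, ← Real.sqrt_mul Real.pi_pos.le]
      congr 1
      ring
    rw [erf, hsplit]
    have hπ : Real.sqrt Real.pi ≠ 0 := by positivity
    field_simp
  have hcompl : {x : ℝ | τ < |x|} = (Set.Icc (-τ) τ)ᶜ := by
    ext x
    simp only [Set.mem_setOf_eq, Set.mem_compl_iff, Set.mem_Icc, ← abs_le, not_le]
  rw [hcompl, prob_compl_eq_one_sub measurableSet_Icc, hIcc]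
  have herf : 0 ≤ erf (τ / c) := erf_nonneg (by positivity)
  rw [ENNReal.ofReal_sub _ herf, ENNReal.ofReal_one]

/-- Let `ε | T₁ ~ N(0, σ₁²)` with `σ₁² = λ(b−a)³/(48m²)`, where the event `T₁` has
probability `P(|Z| < 4mτ/√(λ(b−a)³)) = erf(2√2 mτ/√(λ(b−a)³))` for `Z ~ N(0,1)`. Then
`P(|ε| > τ) ≥ P(|ε| > τ | T₁) P(T₁)
  = [1 − erf(2√6 mτ/√(λ(b−a)³))] · erf(2√2 mτ/√(λ(b−a)³)) > 0`. -/
theorem adaptive_trapezoid_error_lower_bound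
    {Ω : Type*} [MeasurableSpace Ω] (μ : Measure Ω) [IsProbabilityMeasure μ]
    (l a b τ : ℝ) (hl : 0 < l) (hab : a < b) (hτ : 0 < τ) (m : ℕ) (hm : 1 ≤ m)
    (ε : Ω → ℝ) (hε : Measurable ε)
    (T₁ : Set Ω) (hT₁ : MeasurableSet T₁)
    (hPT₁ : μ T₁ =
      ENNReal.ofReal (erf (2 * Real.sqrt 2 * m * τ / Real.sqrt (l * (b - a) ^ 3))))
    (hcond : Measure.map ε (μ[|T₁]) =
      gaussianReal 0 (Real.toNNReal (l * (b - a) ^ 3 / (48 * m ^ 2)))) :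
    ENNReal.ofReal
        ((1 - erf (2 * Real.sqrt 6 * m * τ / Real.sqrt (l * (b - a) ^ 3))) *
          erf (2 * Real.sqrt 2 * m * τ / Real.sqrt (l * (b - a) ^ 3))) ≤
        μ {ω | τ < |ε ω|} ∧
      0 < μ {ω | τ < |ε ω|} := by
  have hba : (0:ℝ) < b - a := sub_pos.2 hab
  have hL : (0:ℝ) < l * (b - a) ^ 3 := by positivity
  have hM : (0:ℝ) < (m : ℝ) := by exact_mod_cast hm
  set L : ℝ := l * (b - a) ^ 3 with hLdef
  set v : ℝ := L / (48 * (m:ℝ) ^ 2) with hvdef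
  have hv : 0 < v := by positivity
  -- the erf argument for the tail
  have h6 : Real.sqrt (24 * (m:ℝ) ^ 2) = 2 * Real.sqrt 6 * m := by
    have hsq : (2 * Real.sqrt 6 * (m:ℝ)) ^ 2 = 24 * (m:ℝ) ^ 2 := by
      have h66 : Real.sqrt 6 ^ 2 = 6 := Real.sq_sqrt (by norm_num)
      nlinarith [h66]
    rw [← hsq, Real.sqrt_sq (by positivity)]
  have hA : τ / Real.sqrt (2 * v) = 2 * Real.sqrt 6 * m * τ / Real.sqrt L := by
    have h2v : 2 * v = L / (24 * (m:ℝ) ^ 2) := by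
      rw [hvdef]; ring
    rw [h2v, Real.sqrt_div hL.le, h6]
    have hsL : (0:ℝ) < Real.sqrt L := Real.sqrt_pos.2 hL
    have h6p : (0:ℝ) < Real.sqrt 6 := Real.sqrt_pos.2 (by norm_num)
    field_simp
  -- the tail under the conditional law
  have hsetm : MeasurableSet {x : ℝ | τ < |x|} :=
    measurableSet_lt measurable_const (continuous_abs.measurable)
  have htail : (μ[|T₁]) {ω | τ < |ε ω|} =
      ENNReal.ofReal (1 - erf (2 * Real.sqrt 6 * m * τ / Real.sqrt L)) := by
    have hpre : {ω | τ < |ε ω|} = ε ⁻¹' {x | τ < |x|} := rfl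
    rw [hpre, ← Measure.map_apply hε hsetm, hcond]
    have := gaussian_tail v τ hv hτ
    rw [hA] at this
    exact this
  -- positivity of the tail probability
  have htailpos : 0 < ENNReal.ofReal (1 - erf (2 * Real.sqrt 6 * m * τ / Real.sqrt L)) := by
    have hV : v.toNNReal ≠ 0 := by
      simp only [ne_eq, Real.toNNReal_eq_zero, not_le]
      exact hv
    have hgpos : gaussianReal 0 v.toNNReal {x | τ < |x|} ≠ 0 := by
      intro h0
      have hvol : (volume : Measure ℝ) {x | τ < |x|} = 0 :=
        (gaussianReal_absolutelyContinuous' 0 hV) h0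
      have hsub : Set.Ioi τ ⊆ {x : ℝ | τ < |x|} := by
        intro x hx
        have : τ < x := hx
        simp only [Set.mem_setOf_eq]
        calc τ < x := this
        _ ≤ |x| := le_abs_self x
      have : (volume : Measure ℝ) (Set.Ioi τ) = 0 :=
        le_antisymm (hvol ▸ measure_mono hsub) zero_le
      rw [Real.volume_Ioi] at this
      exact ENNReal.top_ne_zero this
    have := gaussian_tail v τ hv hτ
    rw [hA] at this
    rw [this] at hgpos
    exact pos_iff_ne_zero.2 hgpos
  have h1A : 0 < 1 - erf (2 * Real.sqrt 6 * m * τ / Real.sqrt L) :=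
    ENNReal.ofReal_pos.1 htailpos
  have hB : 0 < erf (2 * Real.sqrt 2 * m * τ / Real.sqrt L) := by
    apply erf_pos
    have h2p : (0:ℝ) < Real.sqrt 2 := Real.sqrt_pos.2 (by norm_num)
    have hsL : (0:ℝ) < Real.sqrt L := Real.sqrt_pos.2 hL
    positivity
  have hμT₁ : μ T₁ ≠ 0 := by
    rw [hPT₁]
    exact (ENNReal.ofReal_pos.2 hB).ne'
  have hμT₁top : μ T₁ ≠ ⊤ := (measure_lt_top μ T₁).ne
  -- key product identity
  have hinter : μ (T₁ ∩ {ω | τ < |ε ω|}) = μ T₁ * (μ[|T₁]) {ω | τ < |ε ω|} := by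
    rw [cond_apply hT₁, ← mul_assoc, ENNReal.mul_inv_cancel hμT₁ hμT₁top, one_mul]
  have hlow : ENNReal.ofReal
      ((1 - erf (2 * Real.sqrt 6 * m * τ / Real.sqrt L)) *
        erf (2 * Real.sqrt 2 * m * τ / Real.sqrt L)) ≤ μ {ω | τ < |ε ω|} := by
    have e1 : ENNReal.ofReal
        ((1 - erf (2 * Real.sqrt 6 * m * τ / Real.sqrt L)) *
          erf (2 * Real.sqrt 2 * m * τ / Real.sqrt L))
        = μ T₁ * (μ[|T₁]) {ω | τ < |ε ω|} := by
      rw [hPT₁, htail, ← ENNReal.ofReal_mul hB.le, mul_comm]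
    rw [e1, ← hinter]
    exact measure_mono Set.inter_subset_right
  refine ⟨hlow, lt_of_lt_of_le ?_ hlow⟩
  exact ENNReal.ofReal_pos.2 (mul_pos h1A hB)
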